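/- For a set R of Horn rules on a finite set Q, every critical rule (A, q) of the antimatroid A(R) is dominated by some rule of R: there exists (A', q) ∈ R with A ⊆ A'. -/
import Mathlib


variable {α : Type*} [DecidableEq α] [Fintype α]

/-- A family of subsets is union-closed. -/
def UnionClosed (K : Set (Finset α)) : Prop :=
  ∀ X ∈ K, ∀ Y ∈ K, X ∪ Y ∈ K

/-- There is a tight path in `K` from `S` to `T`: a chain of members of `K`
each obtained from the previous by adding exactly one element. -/
def TightPath (K : Set (Finset α)) (S T : Finset α) : Prop :=
  ∃ (k : ℕ) (Y : ℕ → Finset α), Y 0 = S ∧ Y k = T ∧ (∀ i ≤ k, Y i ∈ K) ∧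
    ∀ i < k, Y i ⊆ Y (i + 1) ∧ (Y (i + 1) \ Y i).card = 1

/-- The family of members of `K` reachable from `∅` by a tight path in `K`. -/
def checkFam (K : Set (Finset α)) : Set (Finset α) :=
  {X | X ∈ K ∧ TightPath K ∅ X}

/-- Accessibility: every nonempty member can lose some element and stay in the family. -/
def Accessible (K : Set (Finset α)) : Prop :=
  ∀ X ∈ K, X ≠ ∅ → ∃ x ∈ X, X.erase x ∈ K

/-- An antimatroid: contains `∅`, union-closed, and accessible. -/
def IsAntimatroid (K : Set (Finset α)) : Prop :=
  ∅ ∈ K ∧ UnionClosed K ∧ Accessible K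

/-- A Horn rule `(A, q)` accepts `X` if `q ∈ X` implies `X ∩ A ≠ ∅`. -/
def Accepts (r : Finset α × α) (X : Finset α) : Prop :=
  r.2 ∈ X → (X ∩ r.1).Nonempty

/-- The union-closed family determined by a set of Horn rules. -/
def KFam (R : Set (Finset α × α)) : Set (Finset α) :=
  {X | ∀ r ∈ R, Accepts r X}

/-- The maximal antimatroid contained in `KFam R`. -/
def AFam (R : Set (Finset α × α)) : Set (Finset α) :=
  checkFam (KFam R)

/-- `(A, q)` is a critical rule of the antimatroid `AFam R`: with `X` the maximal
member of `AFam R` contained in `Q \ (A ∪ {q})`, one has `X ∪ {q} ∉ AFam R` and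
`X ∪ {q, s} ∈ AFam R` for every `s ∈ A`. -/
def CriticalRule (R : Set (Finset α × α)) (A : Finset α) (q : α) : Prop :=
  q ∉ A ∧ ∃ X : Finset α, X ∈ AFam R ∧ X ⊆ Finset.univ \ insert q A ∧
    (∀ Z ∈ AFam R, Z ⊆ Finset.univ \ insert q A → Z ⊆ X) ∧
    insert q X ∉ AFam R ∧ ∀ s ∈ A, insert s (insert q X) ∈ AFam R

lemma checkFam_insert (K : Set (Finset α)) (X : Finset α) (hX : X ∈ checkFam K)
    (q : α) (hq : q ∉ X) (hK : insert q X ∈ K) : insert q X ∈ checkFam K := by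
  obtain ⟨hXK, k, Y, h0, hk, hmem, hstep⟩ := hX
  refine ⟨hK, k + 1, fun i => if i ≤ k then Y i else insert q X, ?_, ?_, ?_, ?_⟩
  · simp [h0]
  · simp
  · intro i hi
    by_cases hik : i ≤ k
    · simp [hik, hmem i hik]
    · simp [hik, hK]
  · intro i hi
    rcases lt_or_eq_of_le (Nat.lt_succ_iff.mp hi) with hlt | heq
    · have h1 : i ≤ k := hlt.le
      have h2 : i + 1 ≤ k := hlt
      simp only [h1, h2, if_pos]
      exact hstep i hlt
    · subst heq
      have h2 : ¬ (i + 1 ≤ i) := by omega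
      simp only [le_refl, if_pos, h2, if_neg, hk, if_false]
      refine ⟨Finset.subset_insert _ _, ?_⟩
      rw [show insert q X \ X = {q} by
        ext a; simp only [Finset.mem_sdiff, Finset.mem_insert, Finset.mem_singleton]
        constructor
        · rintro ⟨rfl | h, h2⟩; rfl; exact absurd h h2
        · rintro rfl; exact ⟨Or.inl rfl, hq⟩]
      simp

theorem stmt14 (R : Set (Finset α × α)) (A : Finset α) (q : α)
    (h : CriticalRule R A q) :
    ∃ A' : Finset α, (A', q) ∈ R ∧ A ⊆ A' := by
  obtain ⟨hqA, X, hXA, hXsub, _, hqX, hs⟩ := h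
  have hqnX : q ∉ X := fun hx => by
    have := hXsub hx; simp at this
  have hXK : X ∈ KFam R := hXA.1
  -- insert q X ∉ KFam R, else extend tight path
  have hnK : insert q X ∉ KFam R := fun hK => hqX (checkFam_insert _ X hXA q hqnX hK)
  simp only [KFam, Set.mem_setOf_eq] at hnK
  push_neg at hnK
  obtain ⟨r, hrR, hrNA⟩ := hnK
  rw [Accepts, Classical.not_imp, Finset.not_nonempty_iff_eq_empty] at hrNA
  obtain ⟨hr2, hrempty⟩ := hrNA
  -- r.2 = q
  have hr2q : r.2 = q := by
    rcases Finset.mem_insert.mp hr2 with h | h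
    · exact h
    · exfalso
      have := hXK r hrR h
      obtain ⟨x, hx⟩ := this
      have : x ∈ insert q X ∩ r.1 := by
        simp only [Finset.mem_inter] at hx ⊢
        exact ⟨Finset.mem_insert_of_mem hx.1, hx.2⟩
      rw [hrempty] at this; simp at this
  refine ⟨r.1, by rwa [← hr2q, Prod.mk.eta], ?_⟩
  intro s hsA
  have hmem := (hs s hsA).1 r hrR
  have hq' : r.2 ∈ insert s (insert q X) := by
    rw [hr2q]; simp
  obtain ⟨x, hx⟩ := hmem hq'
  simp only [Finset.mem_inter, Finset.mem_insert] at hx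
  obtain ⟨hx1, hx2⟩ := hx
  rcases hx1 with rfl | hx1
  · exact hx2
  · exfalso
    have : x ∈ insert q X ∩ r.1 := Finset.mem_inter.mpr ⟨by simp [hx1], hx2⟩
    rw [hrempty] at this; simp at this
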